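/- Let f be continuous on the closed bidisk D̄² ⊂ ℂ² and holomorphic on the open bidisk D². Let 0<q<1 and let X ⊆ 𝕋² be a subset of the torus such that sup over the set ⋃_{k≥0} qᵏ·X of |f| equals sup_{D²} |f|. If additionally sup_{⋃_{k≥0} qᵏ X̄} |f| = sup_{D̄²} |f| for every such f, then the closure of X contains 𝕋² (since 𝕋² is the Shilov boundary of the bidisk algebra), i.e. X is dense in 𝕋². -/

import Mathlib

/-- Basic bound: `|(1 + z·conj w)/2| ≤ (1+c)/2` when `|z| ≤ c`, `|w| = 1`. -/
lemma stmt13_fb (z w : ℂ) (c : ℝ) (hz : ‖z‖ ≤ c) (hw : ‖w‖ = 1) :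
    ‖(1 + z * (starRingEnd ℂ) w) / 2‖ ≤ (1 + c) / 2 := by
  rw [norm_div, Complex.norm_two]
  gcongr
  calc ‖1 + z * (starRingEnd ℂ) w‖
      ≤ ‖1‖ + ‖z * (starRingEnd ℂ) w‖ :=
        norm_add_le _ _
    _ = 1 + ‖z‖ * ‖w‖ := by rw [norm_one, norm_mul, Complex.norm_conj]
    _ ≤ 1 + c := by rw [hw, mul_one]; linarith

/-- Peak-separation bound on the torus. -/
lemma stmt13_fb2 (z w : ℂ) (δ : ℝ) (hδ : 0 ≤ δ) (hz : ‖z‖ = 1)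
    (hw : ‖w‖ = 1) (hd : δ ≤ ‖z - w‖) :
    ‖(1 + z * (starRingEnd ℂ) w) / 2‖ ≤ Real.sqrt (4 - δ ^ 2) / 2 := by
  rw [norm_div, Complex.norm_two]
  gcongr
  have hww : w * (starRingEnd ℂ) w = 1 := by
    rw [Complex.mul_conj]
    norm_cast
    rw [Complex.normSq_eq_norm_sq, hw]; norm_num
  have h1 : (1 : ℂ) + z * (starRingEnd ℂ) w = (w + z) * (starRingEnd ℂ) w := by
    rw [add_mul, hww]
  rw [h1, norm_mul, Complex.norm_conj, hw, mul_one]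
  have key : Complex.normSq (w + z)
      = 2 * Complex.normSq w + 2 * Complex.normSq z - Complex.normSq (z - w) := by
    simp only [Complex.normSq_apply, Complex.add_re, Complex.add_im, Complex.sub_re,
      Complex.sub_im]
    ring
  have hnw : Complex.normSq w = 1 := by rw [Complex.normSq_eq_norm_sq, hw]; norm_num
  have hnz : Complex.normSq z = 1 := by rw [Complex.normSq_eq_norm_sq, hz]; norm_num
  have hzw : Complex.normSq (z - w) = ‖z - w‖ ^ 2 := by
    rw [Complex.normSq_eq_norm_sq]
  have hδ2 : δ ^ 2 ≤ ‖z - w‖ ^ 2 := by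
    exact pow_le_pow_left₀ hδ hd 2
  rw [Complex.norm_def]
  apply Real.sqrt_le_sqrt
  rw [key, hnw, hnz, hzw]
  linarith

/-- Let X ⊆ 𝕋² be such that for every function f continuous on the closed
bidisk and holomorphic on the open bidisk, `sup_{⋃_{k≥0} qᵏX} |f| = sup_{D̄²} |f|`.
Then the closure of X contains 𝕋² (𝕋² being the Shilov boundary of the bidisk algebra),
i.e. X is dense in 𝕋². -/
theorem stmt13 (q : ℝ) (hq0 : 0 < q) (hq1 : q < 1)
    (X : Set (ℂ × ℂ))
    (hX : X ⊆ {p : ℂ × ℂ | ‖p.1‖ = 1 ∧ ‖p.2‖ = 1})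
    (hf : ∀ f : ℂ × ℂ → ℂ,
      ContinuousOn f {p : ℂ × ℂ | ‖p.1‖ ≤ 1 ∧ ‖p.2‖ ≤ 1} →
      DifferentiableOn ℂ f {p : ℂ × ℂ | ‖p.1‖ < 1 ∧ ‖p.2‖ < 1} →
      sSup ((fun p => ‖f p‖) ''
          ⋃ k : ℕ, (fun p : ℂ × ℂ => (((q ^ k : ℝ) : ℂ) * p.1, ((q ^ k : ℝ) : ℂ) * p.2)) '' X)
        = sSup ((fun p => ‖f p‖) ''
            {p : ℂ × ℂ | ‖p.1‖ ≤ 1 ∧ ‖p.2‖ ≤ 1})) :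
    {p : ℂ × ℂ | ‖p.1‖ = 1 ∧ ‖p.2‖ = 1} ⊆ closure X := by
  intro p hp
  obtain ⟨hp1, hp2⟩ := hp
  by_contra hpc
  rw [Metric.mem_closure_iff] at hpc
  push_neg at hpc
  obtain ⟨ε, hε, hsep⟩ := hpc
  set δ : ℝ := min ε 1 with hδdef
  have hδ0 : 0 < δ := lt_min hε one_pos
  have hδ1 : δ ≤ 1 := min_le_right _ _
  set f : ℂ × ℂ → ℂ := fun z =>
    ((1 + z.1 * (starRingEnd ℂ) p.1) / 2) * ((1 + z.2 * (starRingEnd ℂ) p.2) / 2) with hfdef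
  have hc : Continuous f := by fun_prop
  have hdiff : Differentiable ℂ f := by fun_prop
  -- |f| ≤ 1 on the closed bidisk
  have hb : ∀ z : ℂ × ℂ, ‖z.1‖ ≤ 1 → ‖z.2‖ ≤ 1 →
      ‖f z‖ ≤ 1 := by
    intro z h1 h2
    have b1 := stmt13_fb z.1 p.1 1 h1 hp1
    have b2 := stmt13_fb z.2 p.2 1 h2 hp2
    have b1' : ‖(1 + z.1 * (starRingEnd ℂ) p.1) / 2‖ ≤ 1 := by linarith
    have b2' : ‖(1 + z.2 * (starRingEnd ℂ) p.2) / 2‖ ≤ 1 := by linarith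
    calc ‖f z‖
        = ‖(1 + z.1 * (starRingEnd ℂ) p.1) / 2‖
          * ‖(1 + z.2 * (starRingEnd ℂ) p.2) / 2‖ := norm_mul _ _
      _ ≤ 1 * 1 := mul_le_mul b1' b2' (norm_nonneg _) zero_le_one
      _ = 1 := by norm_num
  -- f p = 1
  have hfp : ‖f p‖ = 1 := by
    have h1 : p.1 * (starRingEnd ℂ) p.1 = 1 := by
      rw [Complex.mul_conj]; norm_cast
      rw [Complex.normSq_eq_norm_sq, hp1]; norm_num
    have h2 : p.2 * (starRingEnd ℂ) p.2 = 1 := by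
      rw [Complex.mul_conj]; norm_cast
      rw [Complex.normSq_eq_norm_sq, hp2]; norm_num
    simp [hfdef, h1, h2]
  set M : ℝ := max ((1 + q) / 2) (Real.sqrt (4 - δ ^ 2) / 2) with hMdef
  have hM0 : 0 ≤ M := le_trans (by linarith) (le_max_left _ _)
  have hM1 : M < 1 := by
    apply max_lt (by linarith)
    rw [div_lt_one (by norm_num : (0:ℝ) < 2)]
    have : (4 : ℝ) - δ ^ 2 < 2 ^ 2 := by nlinarith
    exact (Real.sqrt_lt' (by norm_num)).mpr this
  -- bound over the union
  have hUb : ∀ y ∈ ((fun p => ‖f p‖) ''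
      ⋃ k : ℕ, (fun p : ℂ × ℂ => (((q ^ k : ℝ) : ℂ) * p.1, ((q ^ k : ℝ) : ℂ) * p.2)) '' X),
      y ≤ M := by
    rintro y ⟨z, hz, rfl⟩
    rw [Set.mem_iUnion] at hz
    obtain ⟨k, x, hxX, rfl⟩ := hz
    obtain ⟨hx1, hx2⟩ := hX hxX
    rcases Nat.eq_zero_or_pos k with hk | hk
    · -- k = 0 : use separation from p
      subst hk
      simp only [pow_zero, Complex.ofReal_one, one_mul]
      have hd := hsep x hxX
      rw [Prod.dist_eq, le_max_iff] at hd
      have habs : ‖f (x.1, x.2)‖ =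
          ‖(1 + x.1 * (starRingEnd ℂ) p.1) / 2‖
          * ‖(1 + x.2 * (starRingEnd ℂ) p.2) / 2‖ := norm_mul _ _
      rcases hd with hd | hd
      · -- first coordinate separated
        have hd1 : δ ≤ ‖x.1 - p.1‖ := by
          rw [Complex.dist_eq, ← norm_neg, neg_sub] at hd
          exact le_trans (min_le_left _ _) hd
        have b1 := stmt13_fb2 x.1 p.1 δ hδ0.le hx1 hp1 hd1
        have b2 := stmt13_fb x.2 p.2 1 hx2.le hp2
        have b2' : ‖(1 + x.2 * (starRingEnd ℂ) p.2) / 2‖ ≤ 1 := by linarith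
        calc ‖f (x.1, x.2)‖
            ≤ (Real.sqrt (4 - δ ^ 2) / 2) * 1 :=
              habs ▸ mul_le_mul b1 b2' (norm_nonneg _)
                (by positivity)
          _ = Real.sqrt (4 - δ ^ 2) / 2 := mul_one _
          _ ≤ M := le_max_right _ _
      · -- second coordinate separated
        have hd2 : δ ≤ ‖x.2 - p.2‖ := by
          rw [Complex.dist_eq, ← norm_neg, neg_sub] at hd
          exact le_trans (min_le_left _ _) hd
        have b2 := stmt13_fb2 x.2 p.2 δ hδ0.le hx2 hp2 hd2
        have b1 := stmt13_fb x.1 p.1 1 hx1.le hp1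
        have b1' : ‖(1 + x.1 * (starRingEnd ℂ) p.1) / 2‖ ≤ 1 := by linarith
        calc ‖f (x.1, x.2)‖
            ≤ 1 * (Real.sqrt (4 - δ ^ 2) / 2) :=
              habs ▸ mul_le_mul b1' b2 (norm_nonneg _) zero_le_one
          _ = Real.sqrt (4 - δ ^ 2) / 2 := one_mul _
          _ ≤ M := le_max_right _ _
    · -- k ≥ 1 : points are deep inside the disk
      have hqk : q ^ k ≤ q := by
        calc q ^ k ≤ q ^ 1 := pow_le_pow_of_le_one hq0.le hq1.le hk
          _ = q := pow_one q
      have hqk0 : 0 ≤ q ^ k := pow_nonneg hq0.le k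
      have ha1 : ‖((q ^ k : ℝ) : ℂ) * x.1‖ ≤ q := by
        rw [norm_mul, Complex.norm_real, Real.norm_eq_abs, hx1, mul_one, abs_of_nonneg hqk0]
        exact hqk
      have ha2 : ‖((q ^ k : ℝ) : ℂ) * x.2‖ ≤ 1 := by
        rw [norm_mul, Complex.norm_real, Real.norm_eq_abs, hx2, mul_one, abs_of_nonneg hqk0]
        exact le_trans hqk hq1.le
      have b1 := stmt13_fb (((q ^ k : ℝ) : ℂ) * x.1) p.1 q ha1 hp1
      have b2 := stmt13_fb (((q ^ k : ℝ) : ℂ) * x.2) p.2 1 ha2 hp2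
      have b2' : ‖(1 + (((q ^ k : ℝ) : ℂ) * x.2) * (starRingEnd ℂ) p.2) / 2‖ ≤ 1 := by
        linarith
      have habs : ‖f (((q ^ k : ℝ) : ℂ) * x.1, ((q ^ k : ℝ) : ℂ) * x.2)‖ =
          ‖(1 + (((q ^ k : ℝ) : ℂ) * x.1) * (starRingEnd ℂ) p.1) / 2‖
          * ‖(1 + (((q ^ k : ℝ) : ℂ) * x.2) * (starRingEnd ℂ) p.2) / 2‖ :=
        norm_mul _ _
      calc ‖f (((q ^ k : ℝ) : ℂ) * x.1, ((q ^ k : ℝ) : ℂ) * x.2)‖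
          ≤ ((1 + q) / 2) * 1 :=
            habs ▸ mul_le_mul b1 b2' (norm_nonneg _) (by linarith)
        _ = (1 + q) / 2 := mul_one _
        _ ≤ M := le_max_left _ _
  -- conclude
  have key := hf f hc.continuousOn hdiff.differentiableOn
  have hBdd : BddAbove ((fun p => ‖f p‖) ''
      {p : ℂ × ℂ | ‖p.1‖ ≤ 1 ∧ ‖p.2‖ ≤ 1}) := by
    refine ⟨1, ?_⟩
    rintro y ⟨z, hz, rfl⟩
    exact hb z hz.1 hz.2
  have h1le : 1 ≤ sSup ((fun p => ‖f p‖) ''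
      {p : ℂ × ℂ | ‖p.1‖ ≤ 1 ∧ ‖p.2‖ ≤ 1}) := by
    apply le_csSup hBdd
    exact ⟨p, ⟨hp1.le, hp2.le⟩, hfp⟩
  have hsle : sSup ((fun p => ‖f p‖) ''
      ⋃ k : ℕ, (fun p : ℂ × ℂ => (((q ^ k : ℝ) : ℂ) * p.1, ((q ^ k : ℝ) : ℂ) * p.2)) '' X)
      ≤ M := Real.sSup_le hUb hM0
  rw [key] at hsle
  linarith
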